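/- Let G be a finite group. Then the intersection graph of subgroups I(G) is weakly α-perfect: the independence number of I(G) (the maximum size of a set of pairwise non-adjacent vertices) equals the clique cover number of I(G) (the minimum number of cliques needed to cover all vertices, which equals the chromatic number of the complement of I(G)). -/

import Mathlib

open SimpleGraph

/-- The intersection graph of subgroups of a group `G`: vertices are the
nontrivial proper subgroups of `G`, and two distinct vertices are adjacent
iff the corresponding subgroups have nontrivial intersection. -/
def interGraph (G : Type*) [Group G] :
    SimpleGraph {H : Subgroup G // H ≠ ⊥ ∧ H ≠ ⊤} where
  Adj H K := H ≠ K ∧ H.1 ⊓ K.1 ≠ ⊥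
  symm := by
    constructor
    rintro H K ⟨hne, hint⟩
    exact ⟨hne.symm, by rwa [inf_comm] at hint⟩
  loopless := by
    constructor
    rintro H ⟨hne, _⟩
    exact hne rfl

theorem intersectionGraph_weakly_alpha_perfect (G : Type*) [Group G] [Finite G] :
    ((interGraph G)ᶜ.cliqueNum : ℕ∞) = (interGraph G)ᶜ.chromaticNumber := by
  classical
  haveI : Finite (Subgroup G) := inferInstance
  haveI : Fintype {H : Subgroup G // H ≠ ⊥ ∧ H ≠ ⊤} := Fintype.ofFinite _
  set Γ := (interGraph G)ᶜ with hΓ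
  -- complement adjacency characterization
  have hadj : ∀ H K : {H : Subgroup G // H ≠ ⊥ ∧ H ≠ ⊤},
      Γ.Adj H K ↔ H ≠ K ∧ H.1 ⊓ K.1 = ⊥ := by
    intro H K
    simp only [hΓ, compl_adj, interGraph, ne_eq]
    constructor
    · rintro ⟨hne, h⟩
      refine ⟨hne, ?_⟩
      by_contra hb
      exact h ⟨hne, hb⟩
    · rintro ⟨hne, h⟩
      exact ⟨hne, fun hc => hc.2 h⟩
  -- atoms
  let A := {a : Subgroup G // IsAtom a ∧ a ≠ ⊤}
  haveI : Fintype A := Fintype.ofFinite _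
  -- every vertex contains an atom
  have hex : ∀ H : {H : Subgroup G // H ≠ ⊥ ∧ H ≠ ⊤}, ∃ a : A, a.1 ≤ H.1 := by
    intro H
    obtain ⟨a, ha, hle⟩ := (eq_bot_or_exists_atom_le H.1).resolve_left H.2.1
    exact ⟨⟨a, ha, fun ht => H.2.2 (top_le_iff.mp (ht ▸ hle))⟩, hle⟩
  choose f hf using hex
  -- coloring
  let C : Γ.Coloring A := Coloring.mk f (by
    intro H K hHK hfeq
    rw [hadj] at hHK
    have h1 : (f H).1 ≤ H.1 ⊓ K.1 := le_inf (hf H) (hfeq ▸ hf K)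
    rw [hHK.2] at h1
    exact (f H).2.1.1 (le_bot_iff.mp h1))
  have hcol : Γ.chromaticNumber ≤ (Fintype.card A : ℕ∞) :=
    C.colorable.chromaticNumber_le
  -- the atoms form a clique in Γ
  have hinj : Function.Injective (fun a : A => (⟨a.1, a.2.1.1, a.2.2⟩ :
      {H : Subgroup G // H ≠ ⊥ ∧ H ≠ ⊤})) := by
    intro a b hab
    exact Subtype.ext (by simpa [Subtype.ext_iff] using hab)
  set s : Finset {H : Subgroup G // H ≠ ⊥ ∧ H ≠ ⊤} :=
    Finset.univ.map ⟨_, hinj⟩ with hs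
  have hclique : Γ.IsClique s := by
    intro H hH K hK hne
    simp only [hs, Finset.coe_map, Set.mem_image, Finset.coe_univ, Set.image_univ,
      Set.mem_range] at hH hK
    obtain ⟨a, rfl⟩ := hH
    obtain ⟨b, rfl⟩ := hK
    rw [hadj]
    refine ⟨hne, ?_⟩
    have hab : a.1 ≠ b.1 := fun h => hne (congrArg _ (Subtype.ext h : a = b))
    exact disjoint_iff.mp (a.2.1.disjoint_of_ne b.2.1 hab)
  have hcard : s.card = Fintype.card A := by simp [hs]
  have h3 : Fintype.card A ≤ Γ.cliqueNum := hcard ▸ hclique.card_le_cliqueNum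
  obtain ⟨t, ht⟩ := Γ.exists_isNClique_cliqueNum
  have h1 : (Γ.cliqueNum : ℕ∞) ≤ Γ.chromaticNumber := by
    rw [← ht.2]
    exact_mod_cast ht.1.card_le_chromaticNumber
  refine le_antisymm h1 (hcol.trans ?_)
  exact_mod_cast h3
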